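/- Let H be a Hopf algebra with invertible antipode, A ⊂ H a left coideal subalgebra, and μ : A → k a nonzero multiplicative functional. If the space of left μ-integrals L_μ = {Λ ∈ A : aΛ = μ(a)Λ for all a ∈ A} is nonzero, or the space of right μ-integrals R_μ is nonzero, then A is finite-dimensional. -/

import Mathlib

open scoped TensorProduct

/-- The submodule of left `μ`-integrals in `A`. -/
def leftIntegrals (k : Type*) {A : Type*} [Field k] [Ring A] [Algebra k A]
    (μ : A →ₐ[k] k) : Submodule k A where
  carrier := {Λ : A | ∀ a : A, a * Λ = μ a • Λ}
  add_mem' := by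
    intro x y hx hy a
    simp only [Set.mem_setOf_eq] at *
    rw [mul_add, hx a, hy a, smul_add]
  zero_mem' := by intro a; simp
  smul_mem' := by
    intro c x hx a
    simp only [Set.mem_setOf_eq] at *
    rw [mul_smul_comm, hx a, smul_comm]

/-- The submodule of right `μ`-integrals in `A`. -/
def rightIntegrals (k : Type*) {A : Type*} [Field k] [Ring A] [Algebra k A]
    (μ : A →ₐ[k] k) : Submodule k A where
  carrier := {Λ : A | ∀ a : A, Λ * a = μ a • Λ}
  add_mem' := by
    intro x y hx hy a
    simp only [Set.mem_setOf_eq] at *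
    rw [add_mul, hx a, hy a, smul_add]
  zero_mem' := by intro a; simp
  smul_mem' := by
    intro c x hx a
    simp only [Set.mem_setOf_eq] at *
    rw [smul_mul_assoc, hx a, smul_comm]

set_option maxHeartbeats 1000000
set_option synthInstance.maxHeartbeats 200000
open TensorProduct Coalgebra HopfAlgebra LinearMap
namespace HopfProofAux
variable {k H : Type*} [CommSemiring k] [Semiring H] [HopfAlgebra k H]

lemma sum_counit_right_smul {a : H} {ι : Type*} (r : Coalgebra.Repr k a ι) :
    ∑ i ∈ r.index, counit (R := k) (r.right i) • r.left i = a := by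
  have h := congrArg (TensorProduct.rid k H) (Coalgebra.sum_tmul_counit_eq (R := k) r)
  rw [map_sum] at h
  simp only [TensorProduct.rid_tmul, one_smul] at h
  exact h

lemma sum_counit_left_smul {a : H} {ι : Type*} (r : Coalgebra.Repr k a ι) :
    ∑ i ∈ r.index, counit (R := k) (r.left i) • r.right i = a := by
  have h := congrArg (TensorProduct.lid k H) (Coalgebra.sum_counit_tmul_eq (R := k) r)
  rw [map_sum] at h
  simp only [TensorProduct.lid_tmul, one_smul] at h
  exact h

noncomputable def reprMul {a b : H} {ι₁ ι₂ : Type*} (ra : Coalgebra.Repr k a ι₁)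
    (rb : Coalgebra.Repr k b ι₂) :
    Coalgebra.Repr k (a * b) (ι₁ × ι₂) where
  index := ra.index ×ˢ rb.index
  left := fun p => ra.left p.1 * rb.left p.2
  right := fun p => ra.right p.1 * rb.right p.2
  eq := by
    have : CoalgebraStruct.comul (R := k) (a * b) =
        CoalgebraStruct.comul (R := k) a * CoalgebraStruct.comul (R := k) b := by
      simpa using map_mul (Bialgebra.comulAlgHom k H) a b
    rw [this, ← ra.eq, ← rb.eq, Finset.sum_mul_sum, Finset.sum_product]
    simp [Algebra.TensorProduct.tmul_mul_tmul]

noncomputable def reprOne : Coalgebra.Repr k (1 : H) ℕ :=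
  ⟨({0} : Finset ℕ), fun _ => 1, fun _ => 1, by
    simp [Bialgebra.comul_one, Algebra.TensorProduct.one_def]⟩

@[simp]
lemma antipode_one' : antipode (R := k) (1 : H) = 1 := by
  have h := sum_antipode_mul_eq_algebraMap_counit (R := k) (reprOne (k := k) (H := H))
  simp only [reprOne, Finset.sum_singleton, mul_one, Bialgebra.counit_one, map_one] at h
  exact h

theorem antipode_mul_rev (a b : H) :
    antipode (R := k) (a * b) = antipode (R := k) b * antipode (R := k) a := by
  classical
  let ra := ℛ k a
  let rb := ℛ k b
  let raL : (i : ra.ι) → Coalgebra.Repr k (ra.left i) (H × H) := fun i => ℛ k (ra.left i)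
  let raR : (i : ra.ι) → Coalgebra.Repr k (ra.right i) (H × H) := fun i => ℛ k (ra.right i)
  let rbL : (j : rb.ι) → Coalgebra.Repr k (rb.left j) (H × H) := fun j => ℛ k (rb.left j)
  let rbR : (j : rb.ι) → Coalgebra.Repr k (rb.right j) (H × H) := fun j => ℛ k (rb.right j)

  have hA : (∑ i ∈ ra.index, ∑ j ∈ rb.index, ∑ p ∈ (raR i).index, ∑ q ∈ (rbR j).index,
      antipode (R := k) (ra.left i * rb.left j) *
        (((raR i).left p * (rbR j).left q) *
          (antipode (R := k) ((rbR j).right q) * antipode (R := k) ((raR i).right p)))) =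
      antipode (R := k) (a * b) := by
    have step1 : ∀ i ∈ ra.index, ∀ j ∈ rb.index,
        (∑ p ∈ (raR i).index, ∑ q ∈ (rbR j).index,
          antipode (R := k) (ra.left i * rb.left j) *
            (((raR i).left p * (rbR j).left q) *
              (antipode (R := k) ((rbR j).right q) * antipode (R := k) ((raR i).right p)))) =
        counit (R := k) (rb.right j) • (counit (R := k) (ra.right i) •
          antipode (R := k) (ra.left i * rb.left j)) := by
      intro i _ j _
      have h1 : ∀ p ∈ (raR i).index,
          (∑ q ∈ (rbR j).index,
            antipode (R := k) (ra.left i * rb.left j) *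
              (((raR i).left p * (rbR j).left q) *
                (antipode (R := k) ((rbR j).right q) * antipode (R := k) ((raR i).right p)))) =
          counit (R := k) (rb.right j) •
            (antipode (R := k) (ra.left i * rb.left j) *
              ((raR i).left p * antipode (R := k) ((raR i).right p))) := by
        intro p _
        have h3 : ∀ q ∈ (rbR j).index,
            antipode (R := k) (ra.left i * rb.left j) *
              (((raR i).left p * (rbR j).left q) *
                (antipode (R := k) ((rbR j).right q) * antipode (R := k) ((raR i).right p))) =
            antipode (R := k) (ra.left i * rb.left j) *
              (raR i).left p * ((rbR j).left q * antipode (R := k) ((rbR j).right q)) *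
                antipode (R := k) ((raR i).right p) := by
          intro q _; simp only [mul_assoc]
        rw [Finset.sum_congr rfl h3, ← Finset.sum_mul, ← Finset.mul_sum,
          sum_mul_antipode_eq_smul (rbR j)]
        rw [mul_smul_comm, smul_mul_assoc, mul_one]
        simp only [mul_assoc]
      rw [Finset.sum_congr rfl h1, ← Finset.smul_sum, ← Finset.mul_sum,
        sum_mul_antipode_eq_smul (raR i)]
      rw [mul_smul_comm, mul_one]
    rw [Finset.sum_congr rfl (fun i hi => Finset.sum_congr rfl (fun j hj => step1 i hi j hj))]
    have expand : antipode (R := k) (a * b) =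
        ∑ i ∈ ra.index, ∑ j ∈ rb.index,
          counit (R := k) (rb.right j) • (counit (R := k) (ra.right i) •
            antipode (R := k) (ra.left i * rb.left j)) := by
      conv_lhs => rw [← sum_counit_right_smul ra, ← sum_counit_right_smul rb]
      rw [Finset.sum_mul_sum, map_sum]
      refine Finset.sum_congr rfl (fun i _ => ?_)
      rw [map_sum]
      refine Finset.sum_congr rfl (fun j _ => ?_)
      rw [smul_mul_assoc, mul_smul_comm, map_smul, map_smul, smul_comm]
    rw [expand]

  have conv1 : (∑ i ∈ ra.index, ∑ j ∈ rb.index, ∑ p ∈ (raR i).index, ∑ q ∈ (rbR j).index,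
      antipode (R := k) (ra.left i * rb.left j) *
        (((raR i).left p * (rbR j).left q) *
          (antipode (R := k) ((rbR j).right q) * antipode (R := k) ((raR i).right p)))) =
      (∑ i ∈ ra.index, ∑ j ∈ rb.index, ∑ p ∈ (raL i).index, ∑ q ∈ (rbR j).index,
      antipode (R := k) ((raL i).left p * rb.left j) *
        (((raL i).right p * (rbR j).left q) *
          (antipode (R := k) ((rbR j).right q) * antipode (R := k) (ra.right i)))) := by
    let Ψ : (j : rb.ι) → (rbR j).ι → (H ⊗[k] (H ⊗[k] H)) →ₗ[k] H := fun j q =>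
      mul' k H ∘ₗ map ((antipode (R := k)) ∘ₗ mulRight k (rb.left j))
        (mul' k H ∘ₗ map (mulRight k ((rbR j).left q))
          (mulLeft k (antipode (R := k) ((rbR j).right q)) ∘ₗ (antipode (R := k))))
    have hΨ : ∀ j q (x y z : H), Ψ j q (x ⊗ₜ[k] (y ⊗ₜ[k] z)) =
        antipode (R := k) (x * rb.left j) *
          ((y * (rbR j).left q) *
            (antipode (R := k) ((rbR j).right q) * antipode (R := k) z)) := by
      intro j q x y z
      simp [Ψ, mul'_apply]
    have key := Coalgebra.sum_tmul_tmul_eq (R := k) ra raL raR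
    rw [Finset.sum_comm]
    conv_rhs => rw [Finset.sum_comm]
    refine Finset.sum_congr rfl (fun j _ => ?_)
    rw [Finset.sum_congr rfl (fun i (_ : i ∈ ra.index) =>
      Finset.sum_comm (s := (raR i).index) (t := (rbR j).index)), Finset.sum_comm]
    conv_rhs => rw [Finset.sum_congr rfl (fun i (_ : i ∈ ra.index) =>
      Finset.sum_comm (s := (raL i).index) (t := (rbR j).index)), Finset.sum_comm]
    refine Finset.sum_congr rfl (fun q _ => ?_)
    have lhs_eq : (∑ i ∈ ra.index, ∑ p ∈ (raR i).index,
        antipode (R := k) (ra.left i * rb.left j) *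
          (((raR i).left p * (rbR j).left q) *
            (antipode (R := k) ((rbR j).right q) * antipode (R := k) ((raR i).right p)))) =
        Ψ j q (∑ i ∈ ra.index, ∑ p ∈ (raR i).index,
          ra.left i ⊗ₜ[k] ((raR i).left p ⊗ₜ[k] (raR i).right p)) := by
      rw [map_sum]
      refine Finset.sum_congr rfl (fun i _ => ?_)
      rw [map_sum]
      exact Finset.sum_congr rfl (fun p _ => (hΨ j q _ _ _).symm)
    have rhs_eq : (∑ i ∈ ra.index, ∑ p ∈ (raL i).index,
        antipode (R := k) ((raL i).left p * rb.left j) *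
          (((raL i).right p * (rbR j).left q) *
            (antipode (R := k) ((rbR j).right q) * antipode (R := k) (ra.right i)))) =
        Ψ j q (∑ i ∈ ra.index, ∑ p ∈ (raL i).index,
          (raL i).left p ⊗ₜ[k] ((raL i).right p ⊗ₜ[k] ra.right i)) := by
      rw [map_sum]
      refine Finset.sum_congr rfl (fun i _ => ?_)
      rw [map_sum]
      exact Finset.sum_congr rfl (fun p _ => (hΨ j q _ _ _).symm)
    rw [lhs_eq, rhs_eq, key]

  have conv2 : (∑ i ∈ ra.index, ∑ j ∈ rb.index, ∑ p ∈ (raL i).index, ∑ q ∈ (rbR j).index,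
      antipode (R := k) ((raL i).left p * rb.left j) *
        (((raL i).right p * (rbR j).left q) *
          (antipode (R := k) ((rbR j).right q) * antipode (R := k) (ra.right i)))) =
      (∑ i ∈ ra.index, ∑ j ∈ rb.index, ∑ p ∈ (raL i).index, ∑ q ∈ (rbL j).index,
      antipode (R := k) ((raL i).left p * (rbL j).left q) *
        (((raL i).right p * (rbL j).right q) *
          (antipode (R := k) (rb.right j) * antipode (R := k) (ra.right i)))) := by
    let Φ : (i : ra.ι) → (raL i).ι → (H ⊗[k] (H ⊗[k] H)) →ₗ[k] H := fun i p =>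
      mul' k H ∘ₗ map ((antipode (R := k)) ∘ₗ mulLeft k ((raL i).left p))
        (mul' k H ∘ₗ map (mulLeft k ((raL i).right p))
          (mulRight k (antipode (R := k) (ra.right i)) ∘ₗ (antipode (R := k))))
    have hΦ : ∀ i p (x y z : H), Φ i p (x ⊗ₜ[k] (y ⊗ₜ[k] z)) =
        antipode (R := k) ((raL i).left p * x) *
          (((raL i).right p * y) *
            (antipode (R := k) z * antipode (R := k) (ra.right i))) := by
      intro i p x y z
      simp [Φ, mul'_apply]
    have key := Coalgebra.sum_tmul_tmul_eq (R := k) rb rbL rbR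
    refine Finset.sum_congr rfl (fun i _ => ?_)
    rw [Finset.sum_comm]
    conv_rhs => rw [Finset.sum_comm]
    refine Finset.sum_congr rfl (fun p _ => ?_)
    have lhs_eq : (∑ j ∈ rb.index, ∑ q ∈ (rbR j).index,
        antipode (R := k) ((raL i).left p * rb.left j) *
          (((raL i).right p * (rbR j).left q) *
            (antipode (R := k) ((rbR j).right q) * antipode (R := k) (ra.right i)))) =
        Φ i p (∑ j ∈ rb.index, ∑ q ∈ (rbR j).index,
          rb.left j ⊗ₜ[k] ((rbR j).left q ⊗ₜ[k] (rbR j).right q)) := by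
      rw [map_sum]
      refine Finset.sum_congr rfl (fun j _ => ?_)
      rw [map_sum]
      exact Finset.sum_congr rfl (fun q _ => (hΦ i p _ _ _).symm)
    have rhs_eq : (∑ j ∈ rb.index, ∑ q ∈ (rbL j).index,
        antipode (R := k) ((raL i).left p * (rbL j).left q) *
          (((raL i).right p * (rbL j).right q) *
            (antipode (R := k) (rb.right j) * antipode (R := k) (ra.right i)))) =
        Φ i p (∑ j ∈ rb.index, ∑ q ∈ (rbL j).index,
          (rbL j).left q ⊗ₜ[k] ((rbL j).right q ⊗ₜ[k] rb.right j)) := by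
      rw [map_sum]
      refine Finset.sum_congr rfl (fun j _ => ?_)
      rw [map_sum]
      exact Finset.sum_congr rfl (fun q _ => (hΦ i p _ _ _).symm)
    rw [lhs_eq, rhs_eq, key]

  have hB : (∑ i ∈ ra.index, ∑ j ∈ rb.index, ∑ p ∈ (raL i).index, ∑ q ∈ (rbL j).index,
      antipode (R := k) ((raL i).left p * (rbL j).left q) *
        (((raL i).right p * (rbL j).right q) *
          (antipode (R := k) (rb.right j) * antipode (R := k) (ra.right i)))) =
      antipode (R := k) b * antipode (R := k) a := by
    have step2 : ∀ i ∈ ra.index, ∀ j ∈ rb.index,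
        (∑ p ∈ (raL i).index, ∑ q ∈ (rbL j).index,
          antipode (R := k) ((raL i).left p * (rbL j).left q) *
            (((raL i).right p * (rbL j).right q) *
              (antipode (R := k) (rb.right j) * antipode (R := k) (ra.right i)))) =
        (counit (R := k) (ra.left i) * counit (R := k) (rb.left j)) •
          (antipode (R := k) (rb.right j) * antipode (R := k) (ra.right i)) := by
      intro i _ j _
      have h4 : ∀ p ∈ (raL i).index, ∀ q ∈ (rbL j).index,
          antipode (R := k) ((raL i).left p * (rbL j).left q) *
            (((raL i).right p * (rbL j).right q) *
              (antipode (R := k) (rb.right j) * antipode (R := k) (ra.right i))) =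
          (antipode (R := k) ((raL i).left p * (rbL j).left q) *
            ((raL i).right p * (rbL j).right q)) *
              (antipode (R := k) (rb.right j) * antipode (R := k) (ra.right i)) := by
        intro p _ q _; simp only [mul_assoc]
      rw [Finset.sum_congr rfl (fun p hp => Finset.sum_congr rfl (fun q hq => h4 p hp q hq))]
      have h5 : (∑ p ∈ (raL i).index, ∑ q ∈ (rbL j).index,
          (antipode (R := k) ((raL i).left p * (rbL j).left q) *
            ((raL i).right p * (rbL j).right q))) =
          algebraMap k H (counit (R := k) (ra.left i * rb.left j)) := by
        have h6 := sum_antipode_mul_eq_algebraMap_counit (R := k) (reprMul (raL i) (rbL j))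
        calc (∑ p ∈ (raL i).index, ∑ q ∈ (rbL j).index,
            (antipode (R := k) ((raL i).left p * (rbL j).left q) *
              ((raL i).right p * (rbL j).right q)))
            = ∑ x ∈ (raL i).index ×ˢ (rbL j).index,
              (antipode (R := k) ((raL i).left x.1 * (rbL j).left x.2) *
                ((raL i).right x.1 * (rbL j).right x.2)) := by
              rw [Finset.sum_product]
          _ = algebraMap k H (counit (R := k) (ra.left i * rb.left j)) := h6
      conv_lhs =>
        rw [Finset.sum_congr rfl (fun p (_ : p ∈ (raL i).index) =>
          (Finset.sum_mul ((rbL j).index) _ _).symm)]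
      rw [← Finset.sum_mul, h5, Bialgebra.counit_mul, ← Algebra.smul_def]
    rw [Finset.sum_congr rfl (fun i hi => Finset.sum_congr rfl (fun j hj => step2 i hi j hj))]
    have expand2 : antipode (R := k) b * antipode (R := k) a =
        ∑ i ∈ ra.index, ∑ j ∈ rb.index,
          (counit (R := k) (ra.left i) * counit (R := k) (rb.left j)) •
            (antipode (R := k) (rb.right j) * antipode (R := k) (ra.right i)) := by
      conv_lhs => rw [← sum_counit_left_smul rb, ← sum_counit_left_smul ra]
      rw [map_sum, map_sum, Finset.sum_mul_sum, Finset.sum_comm]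
      refine Finset.sum_congr rfl (fun i _ => ?_)
      refine Finset.sum_congr rfl (fun j _ => ?_)
      rw [map_smul, map_smul, smul_mul_assoc, mul_smul_comm, smul_smul, mul_comm]
    rw [expand2]
  exact hA.symm.trans (conv1.trans (conv2.trans hB))

section Tpart
variable (T : H →ₗ[k] H)
  (hTS : ∀ x : H, T (antipode (R := k) x) = x)
  (hST : ∀ x : H, antipode (R := k) (T x) = x)

include hTS in
lemma S_inj : Function.Injective (antipode (R := k) (A := H)) :=
  fun x y hxy => by rw [← hTS x, ← hTS y, hxy]

include hTS hST in
lemma T_one : T 1 = 1 := by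
  have := hTS 1; rwa [antipode_one'] at this

include hTS hST in
lemma T_mul_rev (a b : H) : T (a * b) = T b * T a := by
  apply S_inj (k := k) T hTS
  rw [hST, antipode_mul_rev, hST, hST]

/-- `x ⊗ y ↦ y * T x` -/
noncomputable def g1 : H ⊗[k] H →ₗ[k] H :=
  mul' k H ∘ₗ (map LinearMap.id T) ∘ₗ (TensorProduct.comm k H H).toLinearMap

@[simp] lemma g1_tmul (x y : H) : g1 T (x ⊗ₜ[k] y) = y * T x := by
  simp [g1, mul'_apply]

/-- `x ⊗ y ↦ T y * x` -/
noncomputable def g2 : H ⊗[k] H →ₗ[k] H :=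
  mul' k H ∘ₗ (map T LinearMap.id) ∘ₗ (TensorProduct.comm k H H).toLinearMap

@[simp] lemma g2_tmul (x y : H) : g2 T (x ⊗ₜ[k] y) = T y * x := by
  simp [g2, mul'_apply]

include hTS hST in
lemma g1_comp_comul :
    (g1 T) ∘ₗ (CoalgebraStruct.comul (R := k) (A := H)) =
      (Algebra.linearMap k H) ∘ₗ (CoalgebraStruct.counit (R := k) (A := H)) := by
  apply LinearMap.ext; intro h
  apply S_inj (k := k) T hTS
  rw [LinearMap.comp_apply, LinearMap.comp_apply]
  have r := ℛ k h
  rw [← r.eq, map_sum, map_sum]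
  have hterm : ∀ i ∈ r.index,
      antipode (R := k) (g1 T (r.left i ⊗ₜ[k] r.right i)) =
        r.left i * antipode (R := k) (r.right i) := by
    intro i _
    rw [g1_tmul, antipode_mul_rev, hST]
  rw [Finset.sum_congr rfl hterm, sum_mul_antipode_eq_algebraMap_counit]
  rw [Algebra.linearMap_apply, Algebra.algebraMap_eq_smul_one, map_smul, antipode_one']

include hTS hST in
lemma g2_comp_comul :
    (g2 T) ∘ₗ (CoalgebraStruct.comul (R := k) (A := H)) =
      (Algebra.linearMap k H) ∘ₗ (CoalgebraStruct.counit (R := k) (A := H)) := by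
  apply LinearMap.ext; intro h
  apply S_inj (k := k) T hTS
  rw [LinearMap.comp_apply, LinearMap.comp_apply]
  have r := ℛ k h
  rw [← r.eq, map_sum, map_sum]
  have hterm : ∀ i ∈ r.index,
      antipode (R := k) (g2 T (r.left i ⊗ₜ[k] r.right i)) =
        antipode (R := k) (r.left i) * r.right i := by
    intro i _
    rw [g2_tmul, antipode_mul_rev, hST]
  rw [Finset.sum_congr rfl hterm, sum_antipode_mul_eq_algebraMap_counit]
  rw [Algebra.linearMap_apply, Algebra.algebraMap_eq_smul_one, map_smul, antipode_one']

/-- `x ⊗ y ↦ antipode x * y` -/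
noncomputable def g3 : H ⊗[k] H →ₗ[k] H :=
  mul' k H ∘ₗ (antipode (R := k)).rTensor H

@[simp] lemma g3_tmul (x y : H) : g3 (k := k) (x ⊗ₜ[k] y) = antipode (R := k) x * y := by
  simp [g3, mul'_apply]

lemma g3_comp_comul :
    (g3 (k := k) (H := H)) ∘ₗ (CoalgebraStruct.comul (R := k) (A := H)) =
      (Algebra.linearMap k H) ∘ₗ (CoalgebraStruct.counit (R := k) (A := H)) := by
  rw [g3, LinearMap.comp_assoc]
  exact HopfAlgebra.mul_antipode_rTensor_comul

end Tpart

/-- collapse the first two legs of `H ⊗ (H ⊗ H)` with `g`. -/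
noncomputable def Gmap (g : H ⊗[k] H →ₗ[k] H) : H ⊗[k] (H ⊗[k] H) →ₗ[k] H ⊗[k] H :=
  g.rTensor H ∘ₗ (TensorProduct.assoc k H H H).symm.toLinearMap

@[simp] lemma Gmap_tmul (g : H ⊗[k] H →ₗ[k] H) (x y z : H) :
    Gmap g (x ⊗ₜ[k] (y ⊗ₜ[k] z)) = g (x ⊗ₜ[k] y) ⊗ₜ[k] z := by
  simp [Gmap]

/-- the algebra morphism `id ⊗ Δ : H ⊗ H → H ⊗ (H ⊗ H)`. -/
noncomputable def Mmap : (H ⊗[k] H) →ₐ[k] (H ⊗[k] (H ⊗[k] H)) :=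
  Algebra.TensorProduct.map (AlgHom.id k H) (Bialgebra.comulAlgHom k H)

@[simp] lemma Mmap_tmul (x y : H) :
    Mmap (k := k) (x ⊗ₜ[k] y) = x ⊗ₜ[k] (CoalgebraStruct.comul (R := k) y) := by
  simp [Mmap]

lemma Mmap_eq_lTensor (w : H ⊗[k] H) :
    Mmap (k := k) w = (CoalgebraStruct.comul (R := k) (A := H)).lTensor H w := by
  induction w using TensorProduct.induction_on with
  | zero => simp
  | tmul x y => simp
  | add u v hu hv => simp [map_add, hu, hv]

/-- the universal collapse lemma :  if `g ∘ Δ = η ∘ ε` then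
`Gmap g ((id ⊗ Δ)(Δ x)) = 1 ⊗ x`. -/
lemma collapse_spectator (g : H ⊗[k] H →ₗ[k] H)
    (hg : g ∘ₗ (CoalgebraStruct.comul (R := k) (A := H)) =
      (Algebra.linearMap k H) ∘ₗ (CoalgebraStruct.counit (R := k) (A := H))) (x : H) :
    Gmap g (Mmap (k := k) (CoalgebraStruct.comul (R := k) x)) = 1 ⊗ₜ[k] x := by
  rw [Mmap_eq_lTensor, Gmap, LinearMap.comp_apply]
  rw [LinearEquiv.coe_coe, Coalgebra.coassoc_symm_apply]
  rw [← LinearMap.comp_apply, ← LinearMap.rTensor_comp, hg]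
  rw [LinearMap.rTensor_comp, LinearMap.comp_apply]
  rw [Coalgebra.rTensor_counit_comul]
  simp

section Glemmas
variable (T : H →ₗ[k] H)

lemma G1_one_tmul_mul (u : H ⊗[k] H) (v : H ⊗[k] (H ⊗[k] H)) :
    Gmap (g1 T) (((1 : H) ⊗ₜ[k] u) * v) = u * Gmap (g1 T) v := by
  induction v using TensorProduct.induction_on with
  | zero => simp
  | add v1 v2 h1 h2 => rw [mul_add, map_add, h1, h2, map_add, mul_add]
  | tmul x w =>
    induction w using TensorProduct.induction_on with
    | zero => simp
    | add w1 w2 h1 h2 =>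
      rw [TensorProduct.tmul_add, mul_add, map_add, h1, h2, map_add, mul_add]
    | tmul y z =>
      induction u using TensorProduct.induction_on with
      | zero => simp
      | add u1 u2 h1 h2 => rw [TensorProduct.tmul_add, add_mul, map_add, h1, h2, add_mul]
      | tmul p q =>
        rw [Algebra.TensorProduct.tmul_mul_tmul, one_mul,
          Algebra.TensorProduct.tmul_mul_tmul, Gmap_tmul, Gmap_tmul, g1_tmul, g1_tmul,
          Algebra.TensorProduct.tmul_mul_tmul]
        rw [mul_assoc]

lemma G3_mul_one_tmul (v : H ⊗[k] (H ⊗[k] H)) (u : H ⊗[k] H) :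
    Gmap (g3 (k := k)) (v * ((1 : H) ⊗ₜ[k] u)) = Gmap (g3 (k := k)) v * u := by
  induction v using TensorProduct.induction_on with
  | zero => simp
  | add v1 v2 h1 h2 => rw [add_mul, map_add, h1, h2, map_add, add_mul]
  | tmul x w =>
    induction w using TensorProduct.induction_on with
    | zero => simp
    | add w1 w2 h1 h2 =>
      rw [TensorProduct.tmul_add, add_mul, map_add, h1, h2, map_add, add_mul]
    | tmul y z =>
      induction u using TensorProduct.induction_on with
      | zero => simp
      | add u1 u2 h1 h2 => rw [TensorProduct.tmul_add, mul_add, map_add, h1, h2, mul_add]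
      | tmul p q =>
        rw [Algebra.TensorProduct.tmul_mul_tmul, mul_one,
          Algebra.TensorProduct.tmul_mul_tmul, Gmap_tmul, Gmap_tmul, g3_tmul, g3_tmul,
          Algebra.TensorProduct.tmul_mul_tmul]
        rw [mul_assoc]

lemma F_mul_tmul (hTS : ∀ x : H, T (antipode (R := k) x) = x)
    (hST : ∀ x : H, antipode (R := k) (T x) = x) (h B : H) (v : H ⊗[k] (H ⊗[k] H)) :
    Gmap (g2 T) (v * ((1 : H) ⊗ₜ[k] (h ⊗ₜ[k] B))) =
      map (mulLeft k (T h)) (mulRight k B) (Gmap (g2 T) v) := by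
  induction v using TensorProduct.induction_on with
  | zero => simp
  | add v1 v2 h1 h2 => rw [add_mul, map_add, h1, h2, map_add, map_add]
  | tmul x w =>
    induction w using TensorProduct.induction_on with
    | zero => simp
    | add w1 w2 h1 h2 =>
      rw [TensorProduct.tmul_add, add_mul, map_add, h1, h2, map_add, map_add]
    | tmul y z =>
      rw [Algebra.TensorProduct.tmul_mul_tmul, mul_one,
        Algebra.TensorProduct.tmul_mul_tmul, Gmap_tmul, Gmap_tmul, g2_tmul, g2_tmul,
        TensorProduct.map_tmul]
      rw [T_mul_rev T hTS hST, mulLeft_apply, mulRight_apply, mul_assoc]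

lemma G1_tmul_w (c : H) (w : H ⊗[k] H) :
    Gmap (g1 T) (c ⊗ₜ[k] w) = (mulRight k (T c)).rTensor H w := by
  induction w using TensorProduct.induction_on with
  | zero => simp
  | add w1 w2 h1 h2 => rw [TensorProduct.tmul_add, map_add, h1, h2, map_add]
  | tmul y z => rw [Gmap_tmul, g1_tmul, LinearMap.rTensor_tmul, mulRight_apply]

lemma G2_tmul_w (c : H) (w : H ⊗[k] H) :
    Gmap (g2 T) (c ⊗ₜ[k] w) = ((mulRight k c) ∘ₗ T).rTensor H w := by
  induction w using TensorProduct.induction_on with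
  | zero => simp
  | add w1 w2 h1 h2 => rw [TensorProduct.tmul_add, map_add, h1, h2, map_add]
  | tmul y z =>
    rw [Gmap_tmul, g2_tmul, LinearMap.rTensor_tmul, LinearMap.comp_apply, mulRight_apply]

end Glemmas

section LinAlg
variable {K V W : Type*} [Field K] [AddCommGroup V] [Module K V]
  [AddCommGroup W] [Module K W]

/-- contraction of the first tensor factor with a functional. -/
noncomputable def Efun (ξ : V →ₗ[K] K) : V ⊗[K] W →ₗ[K] W :=
  (TensorProduct.lid K W).toLinearMap ∘ₗ ξ.rTensor W

@[simp] lemma Efun_tmul (ξ : V →ₗ[K] K) (x : V) (y : W) :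
    Efun ξ (x ⊗ₜ[K] y) = ξ x • y := by
  simp [Efun]

lemma exists_dual_family {n : ℕ} (hv : Fin n → V) (li : LinearIndependent K hv) :
    ∃ ξ : Fin n → (V →ₗ[K] K), ∀ i j, ξ i (hv j) = if j = i then 1 else 0 := by
  classical
  set Wsp := Submodule.span K (Set.range hv) with hWsp
  let b : Module.Basis (Fin n) K Wsp := Module.Basis.span li
  obtain ⟨p, hp⟩ := Submodule.exists_isCompl Wsp
  let pr := Wsp.linearProjOfIsCompl p hp
  refine ⟨fun i => (b.coord i) ∘ₗ pr, ?_⟩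
  intro i j
  have hmem : hv j ∈ Wsp := Submodule.subset_span ⟨j, rfl⟩
  have h1 : pr (hv j) = ⟨hv j, hmem⟩ :=
    Submodule.linearProjOfIsCompl_apply_left hp ⟨hv j, hmem⟩
  have h2 : (⟨hv j, hmem⟩ : Wsp) = b j := by
    apply Subtype.ext
    exact congrArg Subtype.val (Module.Basis.span_apply li j).symm
  rw [LinearMap.comp_apply, h1, h2, Module.Basis.coord_apply, Module.Basis.repr_self,
    Finsupp.single_apply]

lemma exists_dual_one (v : V) (hv : v ≠ 0) : ∃ ξ : V →ₗ[K] K, ξ v = 1 := by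
  have li : LinearIndependent K (fun _ : Fin 1 => v) :=
    linearIndependent_unique_iff.mpr hv
  obtain ⟨ξ, hξ⟩ := exists_dual_family (fun _ : Fin 1 => v) li
  exact ⟨ξ 0, by simpa using hξ 0 0⟩

lemma tmul_right_cancel (w : W) (v : V) (hv : v ≠ 0) (h : w ⊗ₜ[K] v = 0) : w = 0 := by
  obtain ⟨ξ, hξ⟩ := exists_dual_one (K := K) v hv
  have := congrArg ((TensorProduct.rid K W).toLinearMap ∘ₗ ξ.lTensor W) h
  simpa [hξ] using this

lemma exists_indep_rep (u : V ⊗[K] W) :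
    ∃ (n : ℕ) (hv : Fin n → V) (Bv : Fin n → W), LinearIndependent K hv ∧
      u = ∑ e, hv e ⊗ₜ[K] Bv e := by
  classical
  obtain ⟨s, hs⟩ := TensorProduct.exists_finset (R := K) u
  set Wsp := Submodule.span K (Prod.fst '' (s : Set (V × W))) with hWsp
  have hfin : FiniteDimensional K Wsp :=
    FiniteDimensional.span_of_finite K (s.finite_toSet.image _)
  set n := Module.finrank K Wsp with hn
  let b : Module.Basis (Fin n) K Wsp := Module.finBasis K Wsp
  have hmem : ∀ p : {x // x ∈ s}, (p : V × W).1 ∈ Wsp :=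
    fun p => Submodule.subset_span ⟨(p : V × W), p.2, rfl⟩
  refine ⟨n, fun e => ((b e : Wsp) : V),
    fun e => ∑ p ∈ s.attach, (b.repr ⟨(p : V × W).1, hmem p⟩ e) • (p : V × W).2, ?_, ?_⟩
  · exact (b.linearIndependent).map' Wsp.subtype (Submodule.ker_subtype Wsp)
  · rw [hs, ← Finset.sum_attach s (fun p => p.1 ⊗ₜ[K] p.2)]
    have hterm : ∀ p : {x // x ∈ s},
        ((p : V × W).1 ⊗ₜ[K] (p : V × W).2) =
        ∑ e, (b.repr ⟨(p : V × W).1, hmem p⟩ e) • (((b e : Wsp) : V) ⊗ₜ[K] (p : V × W).2) := by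
      intro p
      have hrepr : ((∑ e, (b.repr ⟨(p : V × W).1, hmem p⟩ e) • b e : Wsp) : V)
          = (p : V × W).1 := by
        rw [Module.Basis.sum_repr]
      conv_lhs => rw [← hrepr]
      rw [Submodule.coe_sum]
      rw [TensorProduct.sum_tmul]
      refine Finset.sum_congr rfl (fun e _ => ?_)
      rw [Submodule.coe_smul, TensorProduct.smul_tmul']
    rw [Finset.sum_congr rfl (fun p _ => hterm p), Finset.sum_comm]
    refine Finset.sum_congr rfl (fun e _ => ?_)
    rw [TensorProduct.tmul_sum]
    refine Finset.sum_congr rfl (fun p _ => ?_)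
    rw [TensorProduct.tmul_smul]

end LinAlg

section Main
variable {k H : Type*} [Field k] [Ring H] [HopfAlgebra k H]

lemma lTensor_inj {M N P : Type*} [AddCommGroup M] [Module k M] [AddCommGroup N] [Module k N]
    [AddCommGroup P] [Module k P] (f : M →ₗ[k] N) (hf : Function.Injective f) :
    Function.Injective (f.lTensor P) := by
  obtain ⟨g, hg⟩ := f.exists_leftInverse_of_injective (LinearMap.ker_eq_bot.mpr hf)
  have h : (g.lTensor P) ∘ₗ (f.lTensor P) = LinearMap.id := by
    rw [← LinearMap.lTensor_comp, hg, LinearMap.lTensor_id]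
  intro x y hxy
  have h2 := congrArg (g.lTensor P) hxy
  rwa [← LinearMap.comp_apply, ← LinearMap.comp_apply, h, LinearMap.id_apply,
    LinearMap.id_apply] at h2

/-- The key construction: the coaction `ρ`, the map `φ = (id ⊗ μ) ∘ ρ`, pointwise
representations, and the `ν`-argument showing `ker φ = 0` given `ker φ ≤ ker ε`. -/
lemma key_phi (A : Subalgebra k H)
    (hcoid : ∀ a ∈ A, Coalgebra.comul (R := k) a ∈
      Submodule.span k {t : H ⊗[k] H | ∃ x y : H, y ∈ A ∧ t = x ⊗ₜ[k] y})
    (μ : ↥A →ₐ[k] k) :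
    ∃ (φ : ↥A →ₗ[k] H),
      (∀ x : ↥A, ∃ s : Finset (H × ↥A),
        (CoalgebraStruct.comul (R := k) ((x : H)) = ∑ p ∈ s, p.1 ⊗ₜ[k] ((p.2 : H))) ∧
        (φ x = ∑ p ∈ s, μ p.2 • p.1)) ∧
      ((∀ y : ↥A, φ y = 0 → CoalgebraStruct.counit (R := k) ((y : H)) = 0) →
        ∀ x : ↥A, φ x = 0 → x = 0) := by
  classical
  set val : ↥A →ₗ[k] H := A.val.toLinearMap with hvaldef
  have hval : Function.Injective val := Subtype.val_injective
  set ι : (H ⊗[k] ↥A) →ₗ[k] (H ⊗[k] H) := val.lTensor H with hιdef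
  have hι : Function.Injective ι := lTensor_inj val hval
  have hrange : ∀ x : ↥A, CoalgebraStruct.comul (R := k) ((x : H)) ∈ LinearMap.range ι := by
    intro x
    have hx := hcoid (x : H) x.2
    refine Submodule.span_le.mpr ?_ hx
    rintro t ⟨u, y, hy, rfl⟩
    exact ⟨u ⊗ₜ[k] (⟨y, hy⟩ : ↥A), by rw [hιdef, LinearMap.lTensor_tmul]; rfl⟩
  let e : (H ⊗[k] ↥A) ≃ₗ[k] LinearMap.range ι := LinearEquiv.ofInjective ι hι
  let F : ↥A →ₗ[k] LinearMap.range ι :=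
    (CoalgebraStruct.comul (R := k) ∘ₗ val).codRestrict (LinearMap.range ι)
      (fun x => hrange x)
  set ρ : ↥A →ₗ[k] (H ⊗[k] ↥A) := e.symm.toLinearMap ∘ₗ F with hρdef
  have hρ : ∀ x : ↥A, ι (ρ x) = CoalgebraStruct.comul (R := k) ((x : H)) := by
    intro x
    have h1 : (↑(e (e.symm (F x))) : H ⊗[k] H) = ↑(F x) := by rw [e.apply_symm_apply]
    have h2 : ∀ u : H ⊗[k] ↥A, (↑(e u) : H ⊗[k] H) = ι u := fun u => rfl
    rw [hρdef]
    simp only [LinearMap.comp_apply, LinearEquiv.coe_coe]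
    rw [← h2, h1]
    rfl
  set cμ : (H ⊗[k] ↥A) →ₗ[k] H :=
    (TensorProduct.rid k H).toLinearMap ∘ₗ (μ.toLinearMap.lTensor H) with hcμdef
  have hcμ : ∀ (u : H) (a : ↥A), cμ (u ⊗ₜ[k] a) = μ a • u := by
    intro u a; simp [hcμdef]
  set φ : ↥A →ₗ[k] H := cμ ∘ₗ ρ with hφdef
  have hrep : ∀ x : ↥A, ∃ s : Finset (H × ↥A),
      (CoalgebraStruct.comul (R := k) ((x : H)) = ∑ p ∈ s, p.1 ⊗ₜ[k] ((p.2 : H))) ∧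
      (φ x = ∑ p ∈ s, μ p.2 • p.1) := by
    intro x
    obtain ⟨s, hs⟩ := TensorProduct.exists_finset (R := k) (ρ x)
    refine ⟨s, ?_, ?_⟩
    · rw [← hρ x, hs, map_sum]
      exact Finset.sum_congr rfl (fun p _ => by rw [hιdef, LinearMap.lTensor_tmul]; rfl)
    · rw [hφdef, LinearMap.comp_apply, hs, map_sum]
      exact Finset.sum_congr rfl (fun p _ => hcμ p.1 p.2)
  refine ⟨φ, hrep, ?_⟩
  -- the ν-argument
  intro hker x hx
  -- transported coassociativity
  set ι₂ : (H ⊗[k] (H ⊗[k] ↥A)) →ₗ[k] (H ⊗[k] (H ⊗[k] H)) := ι.lTensor H with hι₂def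
  have hι₂ : Function.Injective ι₂ := lTensor_inj ι hι
  have coassocρ : ∀ y : ↥A, (ρ.lTensor H) (ρ y) =
      (TensorProduct.assoc k H H ↥A) (((CoalgebraStruct.comul (R := k)).rTensor ↥A) (ρ y)) := by
    intro y
    apply hι₂
    have hl : ι₂ ((ρ.lTensor H) (ρ y)) =
        ((CoalgebraStruct.comul (R := k)).lTensor H) (CoalgebraStruct.comul (R := k) ((y : H))) := by
      rw [hι₂def, ← LinearMap.comp_apply, ← LinearMap.lTensor_comp]
      have hcomp : ι ∘ₗ ρ = (CoalgebraStruct.comul (R := k)) ∘ₗ val := LinearMap.ext hρ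
      rw [hcomp, LinearMap.lTensor_comp, LinearMap.comp_apply, ← hιdef, hρ y]
    have hnat : ι₂ ∘ₗ (TensorProduct.assoc k H H ↥A).toLinearMap =
        (TensorProduct.assoc k H H H).toLinearMap ∘ₗ (val.lTensor (H ⊗[k] H)) := by
      apply TensorProduct.ext_threefold
      intro a b c
      simp [hι₂def, hιdef]
    have hr : ι₂ ((TensorProduct.assoc k H H ↥A)
        (((CoalgebraStruct.comul (R := k)).rTensor ↥A) (ρ y))) =
        (TensorProduct.assoc k H H H)
          (((CoalgebraStruct.comul (R := k)).rTensor H) (CoalgebraStruct.comul (R := k) ((y : H)))) := by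
      have := congrFun (congrArg (fun f => f.toFun) hnat)
        (((CoalgebraStruct.comul (R := k)).rTensor ↥A) (ρ y))
      simp only [LinearMap.toFun_eq_coe, LinearMap.comp_apply, LinearEquiv.coe_coe] at this
      rw [this]
      congr 1
      conv_lhs => rw [← LinearMap.comp_apply, LinearMap.lTensor_comp_rTensor]
      rw [← hρ y, hιdef]
      conv_rhs => rw [← LinearMap.comp_apply, LinearMap.rTensor_comp_lTensor]
    rw [hl, hr, Coalgebra.coassoc_apply]
  have hcophi : ∀ y : ↥A, CoalgebraStruct.comul (R := k) (φ y) = (φ.lTensor H) (ρ y) := by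
    intro y
    have hIb : ∀ w : H ⊗[k] ↥A, (cμ.lTensor H) ((TensorProduct.assoc k H H ↥A)
        (((CoalgebraStruct.comul (R := k)).rTensor ↥A) w)) =
        CoalgebraStruct.comul (R := k) (cμ w) := by
      intro w
      induction w using TensorProduct.induction_on with
      | zero =>
        rw [LinearMap.map_zero, LinearEquiv.map_zero, LinearMap.map_zero, LinearMap.map_zero,
          LinearMap.map_zero]
      | add w1 w2 h1 h2 =>
        rw [LinearMap.map_add, LinearEquiv.map_add, LinearMap.map_add, h1, h2,
          LinearMap.map_add, LinearMap.map_add]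
      | tmul u a =>
        have sub : ∀ v : H ⊗[k] H, (cμ.lTensor H) ((TensorProduct.assoc k H H ↥A)
            (v ⊗ₜ[k] a)) = μ a • v := by
          intro v
          induction v using TensorProduct.induction_on with
          | zero => rw [TensorProduct.zero_tmul, LinearEquiv.map_zero, LinearMap.map_zero,
              smul_zero]
          | add v1 v2 h1 h2 => rw [TensorProduct.add_tmul, LinearEquiv.map_add,
              LinearMap.map_add, h1, h2, smul_add]
          | tmul p q => rw [TensorProduct.assoc_tmul, LinearMap.lTensor_tmul, hcμ,
              TensorProduct.tmul_smul]
        rw [LinearMap.rTensor_tmul, sub, hcμ, map_smul]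
    rw [hφdef, LinearMap.comp_apply, ← hIb (ρ y), ← coassocρ y,
      ← LinearMap.comp_apply (cμ.lTensor H), ← LinearMap.lTensor_comp]
  -- now conclude
  have hval0 : (x : H) = 0 := by
    set εA : ↥A →ₗ[k] k := (CoalgebraStruct.counit (R := k)) ∘ₗ val with hεAdef
    have hle : LinearMap.ker φ ≤ LinearMap.ker εA := by
      intro y hy
      rw [LinearMap.mem_ker] at hy ⊢
      exact hker y hy
    obtain ⟨p, hp⟩ := Submodule.exists_isCompl (LinearMap.range φ)
    set pr := (LinearMap.range φ).linearProjOfIsCompl p hp with hprdef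
    set ν : H →ₗ[k] k := ((LinearMap.ker φ).liftQ εA hle) ∘ₗ
      (φ.quotKerEquivRange).symm.toLinearMap ∘ₗ pr with hνdef
    have hν : ∀ y : ↥A, ν (φ y) = εA y := by
      intro y
      have h1 : pr (φ y) = ⟨φ y, LinearMap.mem_range_self φ y⟩ :=
        Submodule.linearProjOfIsCompl_apply_left hp ⟨φ y, LinearMap.mem_range_self φ y⟩
      have h2 : (φ.quotKerEquivRange).symm ⟨φ y, LinearMap.mem_range_self φ y⟩ =
          Submodule.Quotient.mk y := φ.quotKerEquivRange_symm_apply_image y (LinearMap.mem_range_self φ y)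
      rw [hνdef]
      simp only [LinearMap.comp_apply, LinearEquiv.coe_coe]
      rw [h1, h2, Submodule.liftQ_apply]
    have hid : ∀ y : ↥A, (TensorProduct.rid k H) ((ν.lTensor H)
        (CoalgebraStruct.comul (R := k) (φ y))) = (y : H) := by
      intro y
      rw [hcophi y, ← LinearMap.comp_apply, ← LinearMap.lTensor_comp]
      have hνφ : ν ∘ₗ φ = εA := LinearMap.ext hν
      rw [hνφ, hεAdef, LinearMap.lTensor_comp, LinearMap.comp_apply, ← hιdef, hρ y]
      rw [Coalgebra.lTensor_counit_comul]
      simp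
    have := hid x
    rw [hx, map_zero, map_zero, map_zero] at this
    exact this.symm
  exact Subtype.ext hval0

lemma case_left (A : Subalgebra k H)
    (hS : Function.Bijective (HopfAlgebra.antipode (R := k) (A := H)))
    (hcoid : ∀ a ∈ A, Coalgebra.comul (R := k) a ∈
      Submodule.span k {t : H ⊗[k] H | ∃ x y : H, y ∈ A ∧ t = x ⊗ₜ[k] y})
    (μ : ↥A →ₐ[k] k) (Λ : ↥A) (hΛ : Λ ≠ 0)
    (hint : ∀ a : ↥A, a * Λ = μ a • Λ) :
    FiniteDimensional k ↥A := by
  classical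
  -- the inverse antipode
  let E : H ≃ₗ[k] H := LinearEquiv.ofBijective (antipode (R := k)) hS
  set T : H →ₗ[k] H := E.symm.toLinearMap with hTdef
  have hTS : ∀ x : H, T (antipode (R := k) x) = x := fun x => E.symm_apply_apply x
  have hST : ∀ x : H, antipode (R := k) (T x) = x := fun x => E.apply_symm_apply x
  have hTinj : Function.Injective T := fun u v huv => by
    rw [← hST u, ← hST v, huv]
  -- φ and its properties
  obtain ⟨φ, hrep, hphiker⟩ := key_phi A hcoid μ
  have hintH : ∀ a : ↥A, (a : H) * (Λ : H) = μ a • (Λ : H) := fun a => by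
    have := congrArg (Subtype.val) (hint a)
    simpa using this
  have hΛH : (Λ : H) ≠ 0 := fun h => hΛ (Subtype.ext h)
  have hcm : ∀ u v : H, CoalgebraStruct.comul (R := k) (u * v) =
      CoalgebraStruct.comul (R := k) u * CoalgebraStruct.comul (R := k) v := fun u v => by
    simpa using map_mul (Bialgebra.comulAlgHom k H) u v
  -- step 2
  have step2L : ∀ x : ↥A, (CoalgebraStruct.comul (R := k) ((x : H))) *
      ((1 : H) ⊗ₜ[k] ((Λ : H))) = φ x ⊗ₜ[k] ((Λ : H)) := by
    intro x
    obtain ⟨s, hs1, hs2⟩ := hrep x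
    rw [hs1, hs2, Finset.sum_mul, TensorProduct.sum_tmul]
    refine Finset.sum_congr rfl (fun p _ => ?_)
    rw [Algebra.TensorProduct.tmul_mul_tmul, mul_one, hintH p.2, TensorProduct.tmul_smul,
      TensorProduct.smul_tmul']
  -- claim 2
  have claim2 : ∀ x : ↥A, (Mmap (k := k) (CoalgebraStruct.comul (R := k) ((x : H)))) *
      ((1 : H) ⊗ₜ[k] (CoalgebraStruct.comul (R := k) ((Λ : H)))) =
      (φ x) ⊗ₜ[k] (CoalgebraStruct.comul (R := k) ((Λ : H))) := by
    intro x
    obtain ⟨s, hs1, hs2⟩ := hrep x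
    rw [hs1, hs2, map_sum, Finset.sum_mul, TensorProduct.sum_tmul]
    refine Finset.sum_congr rfl (fun p _ => ?_)
    rw [Mmap_tmul, Algebra.TensorProduct.tmul_mul_tmul, mul_one, ← hcm, hintH p.2,
      LinearMap.map_smul, TensorProduct.tmul_smul, TensorProduct.smul_tmul']
  -- claim 3
  have claim3 : ∀ (x : ↥A) (w : H ⊗[k] H),
      Gmap (g2 T) ((Mmap (k := k) (CoalgebraStruct.comul (R := k) ((x : H)))) *
        ((1 : H) ⊗ₜ[k] w)) = TensorProduct.map T (mulLeft k ((x : H))) w := by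
    intro x w
    induction w using TensorProduct.induction_on with
    | zero => rw [TensorProduct.tmul_zero, mul_zero, map_zero, map_zero]
    | add w1 w2 h1 h2 => rw [TensorProduct.tmul_add, mul_add, map_add, h1, h2, map_add]
    | tmul h B =>
      rw [F_mul_tmul T hTS hST h B, collapse_spectator (g2 T) (g2_comp_comul T hTS hST) (x : H),
        TensorProduct.map_tmul, TensorProduct.map_tmul, mulLeft_apply, mulLeft_apply,
        mulRight_apply, mul_one]
  -- the main identity
  have diamond : ∀ x : ↥A, TensorProduct.map T (mulLeft k ((x : H)))
      (CoalgebraStruct.comul (R := k) ((Λ : H))) =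
      ((mulRight k (φ x)) ∘ₗ T).rTensor H (CoalgebraStruct.comul (R := k) ((Λ : H))) := by
    intro x
    rw [← claim3 x, claim2 x, G2_tmul_w]
  -- counit vanishing on the kernel of φ
  have hL5 : ∀ x : ↥A, φ x = 0 → CoalgebraStruct.counit (R := k) ((x : H)) = 0 := by
    intro x hx
    have hd := diamond x
    rw [hx] at hd
    have hz : ((mulRight k (0 : H)) ∘ₗ T) = (0 : H →ₗ[k] H) := by
      ext u; simp
    rw [hz, LinearMap.rTensor_zero, LinearMap.zero_apply] at hd
    obtain ⟨s, hs1, _⟩ := hrep Λ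
    have hsum : ∑ p ∈ s, CoalgebraStruct.counit (R := k) ((p.2 : H)) • p.1 = (Λ : H) := by
      have h1 := congrArg ((TensorProduct.rid k H) ∘
        ((CoalgebraStruct.counit (R := k)).lTensor H)) hs1
      simp only [Function.comp_apply, Coalgebra.lTensor_counit_comul, map_sum,
        LinearMap.lTensor_tmul, TensorProduct.rid_tmul, one_smul] at h1
      exact h1.symm
    have h2 := congrArg ((TensorProduct.rid k H) ∘
      ((CoalgebraStruct.counit (R := k)).lTensor H)) hd
    rw [hs1] at h2
    simp only [Function.comp_apply, map_sum, map_zero] at h2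
    have h3 : ∀ p ∈ s, (TensorProduct.rid k H)
        (((CoalgebraStruct.counit (R := k)).lTensor H)
          ((TensorProduct.map T (mulLeft k ((x : H)))) (p.1 ⊗ₜ[k] ((p.2 : H))))) =
        (CoalgebraStruct.counit (R := k) ((x : H)) *
          CoalgebraStruct.counit (R := k) ((p.2 : H))) • T p.1 := by
      intro p _
      rw [TensorProduct.map_tmul, LinearMap.lTensor_tmul, TensorProduct.rid_tmul,
        mulLeft_apply, Bialgebra.counit_mul]
    rw [Finset.sum_congr rfl h3] at h2
    have h4 : ∑ p ∈ s, (CoalgebraStruct.counit (R := k) ((x : H)) *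
        CoalgebraStruct.counit (R := k) ((p.2 : H))) • T p.1 =
        CoalgebraStruct.counit (R := k) ((x : H)) • T ((Λ : H)) := by
      rw [← hsum, map_sum, Finset.smul_sum]
      refine Finset.sum_congr rfl (fun p _ => ?_)
      rw [mul_smul, map_smul]
    rw [h4] at h2
    rcases smul_eq_zero.mp h2 with h | h
    · exact h
    · exact absurd (hTinj (by rw [h, map_zero])) hΛH
  -- independent representation of comul Λ with coefficients in A
  obtain ⟨sΛ, hsΛ1, _⟩ := hrep Λ
  set u : H ⊗[k] ↥A := ∑ p ∈ sΛ, p.1 ⊗ₜ[k] p.2 with hudef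
  obtain ⟨n, hv, Bv, li, hu⟩ := exists_indep_rep (K := k) u
  have hΛrep : CoalgebraStruct.comul (R := k) ((Λ : H)) =
      ∑ e, hv e ⊗ₜ[k] ((Bv e : H)) := by
    rw [hsΛ1]
    calc (∑ p ∈ sΛ, p.1 ⊗ₜ[k] ((p.2 : H)))
        = (A.val.toLinearMap.lTensor H) u := by
          rw [hudef, map_sum]
          exact Finset.sum_congr rfl (fun p _ => by rw [LinearMap.lTensor_tmul]; rfl)
      _ = ∑ e, hv e ⊗ₜ[k] ((Bv e : H)) := by
          rw [hu, map_sum]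
          exact Finset.sum_congr rfl (fun e _ => by rw [LinearMap.lTensor_tmul]; rfl)
  obtain ⟨ξv, hξv⟩ := exists_dual_family hv li
  set C : Submodule k H := Submodule.span k (Set.range (fun e => ((Bv e : H)))) with hCdef
  have hBC : ∀ e, ((Bv e : H)) ∈ C := fun e => Submodule.subset_span ⟨e, rfl⟩
  -- absorption
  have habsorbB : ∀ (x : ↥A) (e : Fin n), ((x : H)) * ((Bv e : H)) ∈ C := by
    intro x e
    have hd := diamond x
    have hLHS : Efun ((ξv e) ∘ₗ (antipode (R := k)))
        ((TensorProduct.map T (mulLeft k ((x : H))))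
          (CoalgebraStruct.comul (R := k) ((Λ : H)))) = ((x : H)) * ((Bv e : H)) := by
      rw [hΛrep, map_sum, map_sum]
      have hterm : ∀ e', Efun ((ξv e) ∘ₗ (antipode (R := k)))
          ((TensorProduct.map T (mulLeft k ((x : H)))) (hv e' ⊗ₜ[k] ((Bv e' : H)))) =
          ξv e (hv e') • (((x : H)) * ((Bv e' : H))) := by
        intro e'
        rw [TensorProduct.map_tmul, Efun_tmul, LinearMap.comp_apply, hST, mulLeft_apply]
      rw [Finset.sum_congr rfl (fun e' _ => hterm e')]
      have : ∀ e', ξv e (hv e') • (((x : H)) * ((Bv e' : H))) =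
          if e' = e then ((x : H)) * ((Bv e' : H)) else 0 := by
        intro e'
        rw [hξv e e']
        by_cases h : e' = e <;> simp [h]
      rw [Finset.sum_congr rfl (fun e' _ => this e')]
      simp
    have hRHS : Efun ((ξv e) ∘ₗ (antipode (R := k)))
        ((((mulRight k (φ x)) ∘ₗ T).rTensor H)
          (CoalgebraStruct.comul (R := k) ((Λ : H)))) ∈ C := by
      rw [hΛrep, map_sum, map_sum]
      refine Submodule.sum_mem C (fun e' _ => ?_)
      rw [LinearMap.rTensor_tmul, Efun_tmul]
      exact Submodule.smul_mem C _ (hBC e')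
    rw [← hLHS, hd]
    exact hRHS
  have habsorb : ∀ (x : ↥A), ∀ c ∈ C, ((x : H)) * c ∈ C := by
    intro x c hc
    induction hc using Submodule.span_induction with
    | mem c hcmem =>
      obtain ⟨e, rfl⟩ := hcmem
      exact habsorbB x e
    | zero => rw [mul_zero]; exact C.zero_mem
    | add c1 c2 _ _ h1 h2 => rw [mul_add]; exact C.add_mem h1 h2
    | smul r c _ h1 => rw [mul_smul_comm]; exact C.smul_mem r h1
  -- the injective map into End(C)
  have hCfin : FiniteDimensional k C := by
    rw [hCdef]
    exact FiniteDimensional.span_of_finite k (Set.finite_range _)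
  let π : ↥A →ₗ[k] (↥C →ₗ[k] ↥C) :=
    { toFun := fun x => (mulLeft k ((x : H))).restrict (fun c hc => habsorb x c hc)
      map_add' := by
        intro x y
        ext c
        have : ((x + y : ↥A) : H) = ((x : H)) + ((y : H)) := rfl
        simp [LinearMap.coe_restrict_apply, this, add_mul]
        rfl
      map_smul' := by
        intro r x
        ext c
        have : ((r • x : ↥A) : H) = r • ((x : H)) := rfl
        simp [LinearMap.coe_restrict_apply, this, smul_mul_assoc]
        rfl }
  have hker0 : ∀ x : ↥A, π x = 0 → x = 0 := by
    intro x hx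
    have hBzero : ∀ e, ((x : H)) * ((Bv e : H)) = 0 := by
      intro e
      have h1 : (π x) ⟨((Bv e : H)), hBC e⟩ = 0 := by rw [hx]; rfl
      have h2 := congrArg (Subtype.val) h1
      exact h2
    have hw0 : ((1 : H) ⊗ₜ[k] ((x : H))) * (CoalgebraStruct.comul (R := k) ((Λ : H))) = 0 := by
      rw [hΛrep, Finset.mul_sum]
      refine Finset.sum_eq_zero (fun e _ => ?_)
      rw [Algebra.TensorProduct.tmul_mul_tmul, hBzero e, TensorProduct.tmul_zero]
    have h4 : Gmap (g1 T) (Mmap (k := k) (((1 : H) ⊗ₜ[k] ((x : H))) *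
        (CoalgebraStruct.comul (R := k) ((Λ : H))))) = 0 := by
      rw [hw0, map_zero, map_zero]
    rw [map_mul, Mmap_tmul, G1_one_tmul_mul,
      collapse_spectator (g1 T) (g1_comp_comul T hTS hST) ((Λ : H)), step2L x] at h4
    exact hphiker hL5 x (tmul_right_cancel _ _ hΛH h4)
  have hinj : Function.Injective π := by
    intro x y hxy
    have : π (x - y) = 0 := by rw [map_sub, hxy, sub_self]
    have h0 := hker0 _ this
    exact sub_eq_zero.mp h0
  exact Module.Finite.of_injective π hinj

lemma case_right (A : Subalgebra k H)
    (hS : Function.Bijective (HopfAlgebra.antipode (R := k) (A := H)))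
    (hcoid : ∀ a ∈ A, Coalgebra.comul (R := k) a ∈
      Submodule.span k {t : H ⊗[k] H | ∃ x y : H, y ∈ A ∧ t = x ⊗ₜ[k] y})
    (μ : ↥A →ₐ[k] k) (Λ : ↥A) (hΛ : Λ ≠ 0)
    (hint : ∀ a : ↥A, Λ * a = μ a • Λ) :
    FiniteDimensional k ↥A := by
  classical
  let E : H ≃ₗ[k] H := LinearEquiv.ofBijective (antipode (R := k)) hS
  set T : H →ₗ[k] H := E.symm.toLinearMap with hTdef
  have hTS : ∀ x : H, T (antipode (R := k) x) = x := fun x => E.symm_apply_apply x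
  have hST : ∀ x : H, antipode (R := k) (T x) = x := fun x => E.apply_symm_apply x
  obtain ⟨φ, hrep, hphiker⟩ := key_phi A hcoid μ
  have hintH : ∀ a : ↥A, (Λ : H) * (a : H) = μ a • (Λ : H) := fun a => by
    have := congrArg (Subtype.val) (hint a)
    simpa using this
  have hΛH : (Λ : H) ≠ 0 := fun h => hΛ (Subtype.ext h)
  have hcm : ∀ u v : H, CoalgebraStruct.comul (R := k) (u * v) =
      CoalgebraStruct.comul (R := k) u * CoalgebraStruct.comul (R := k) v := fun u v => by
    simpa using map_mul (Bialgebra.comulAlgHom k H) u v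
  -- step 2 (right version)
  have step2R : ∀ x : ↥A, ((1 : H) ⊗ₜ[k] ((Λ : H))) *
      (CoalgebraStruct.comul (R := k) ((x : H))) = φ x ⊗ₜ[k] ((Λ : H)) := by
    intro x
    obtain ⟨s, hs1, hs2⟩ := hrep x
    rw [hs1, hs2, Finset.mul_sum, TensorProduct.sum_tmul]
    refine Finset.sum_congr rfl (fun p _ => ?_)
    rw [Algebra.TensorProduct.tmul_mul_tmul, one_mul, hintH p.2, TensorProduct.tmul_smul,
      TensorProduct.smul_tmul']
  -- claim 2 (right version)
  have claim2R : ∀ x : ↥A, ((1 : H) ⊗ₜ[k] (CoalgebraStruct.comul (R := k) ((Λ : H)))) *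
      (Mmap (k := k) (CoalgebraStruct.comul (R := k) ((x : H)))) =
      (φ x) ⊗ₜ[k] (CoalgebraStruct.comul (R := k) ((Λ : H))) := by
    intro x
    obtain ⟨s, hs1, hs2⟩ := hrep x
    rw [hs1, hs2, map_sum, Finset.mul_sum, TensorProduct.sum_tmul]
    refine Finset.sum_congr rfl (fun p _ => ?_)
    rw [Mmap_tmul, Algebra.TensorProduct.tmul_mul_tmul, one_mul, ← hcm, hintH p.2,
      LinearMap.map_smul, TensorProduct.tmul_smul, TensorProduct.smul_tmul']
  -- the main identity (right version)
  have diamondR : ∀ x : ↥A, (CoalgebraStruct.comul (R := k) ((Λ : H))) *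
      ((1 : H) ⊗ₜ[k] ((x : H))) =
      (mulRight k (T (φ x))).rTensor H (CoalgebraStruct.comul (R := k) ((Λ : H))) := by
    intro x
    calc (CoalgebraStruct.comul (R := k) ((Λ : H))) * ((1 : H) ⊗ₜ[k] ((x : H)))
        = Gmap (g1 T) (((1 : H) ⊗ₜ[k] (CoalgebraStruct.comul (R := k) ((Λ : H)))) *
            (Mmap (k := k) (CoalgebraStruct.comul (R := k) ((x : H))))) := by
          rw [G1_one_tmul_mul, collapse_spectator (g1 T) (g1_comp_comul T hTS hST) ((x : H))]
      _ = Gmap (g1 T) ((φ x) ⊗ₜ[k] (CoalgebraStruct.comul (R := k) ((Λ : H)))) := by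
          rw [claim2R x]
      _ = (mulRight k (T (φ x))).rTensor H (CoalgebraStruct.comul (R := k) ((Λ : H))) :=
          G1_tmul_w T (φ x) _
  -- counit vanishing on the kernel of φ
  have hL5R : ∀ x : ↥A, φ x = 0 → CoalgebraStruct.counit (R := k) ((x : H)) = 0 := by
    intro x hx
    have hd := diamondR x
    rw [hx, map_zero] at hd
    have hz : (mulRight k (0 : H)) = (0 : H →ₗ[k] H) := by ext u; simp
    rw [hz, LinearMap.rTensor_zero, LinearMap.zero_apply] at hd
    obtain ⟨s, hs1, _⟩ := hrep Λ
    have hsum : ∑ p ∈ s, CoalgebraStruct.counit (R := k) ((p.2 : H)) • p.1 = (Λ : H) := by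
      have h1 := congrArg ((TensorProduct.rid k H) ∘
        ((CoalgebraStruct.counit (R := k)).lTensor H)) hs1
      simp only [Function.comp_apply, Coalgebra.lTensor_counit_comul, map_sum,
        LinearMap.lTensor_tmul, TensorProduct.rid_tmul, one_smul] at h1
      exact h1.symm
    have h2 := congrArg ((TensorProduct.rid k H) ∘
      ((CoalgebraStruct.counit (R := k)).lTensor H)) hd
    rw [hs1, Finset.sum_mul] at h2
    simp only [Function.comp_apply, map_sum, map_zero] at h2
    have h3 : ∀ p ∈ s, (TensorProduct.rid k H)
        (((CoalgebraStruct.counit (R := k)).lTensor H)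
          ((p.1 ⊗ₜ[k] ((p.2 : H))) * ((1 : H) ⊗ₜ[k] ((x : H))))) =
        (CoalgebraStruct.counit (R := k) ((p.2 : H)) *
          CoalgebraStruct.counit (R := k) ((x : H))) • p.1 := by
      intro p _
      rw [Algebra.TensorProduct.tmul_mul_tmul, mul_one, LinearMap.lTensor_tmul,
        TensorProduct.rid_tmul, Bialgebra.counit_mul]
    rw [Finset.sum_congr rfl h3] at h2
    have h4 : ∑ p ∈ s, (CoalgebraStruct.counit (R := k) ((p.2 : H)) *
        CoalgebraStruct.counit (R := k) ((x : H))) • p.1 =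
        CoalgebraStruct.counit (R := k) ((x : H)) • ((Λ : H)) := by
      rw [← hsum, Finset.smul_sum]
      refine Finset.sum_congr rfl (fun p _ => ?_)
      rw [mul_comm, mul_smul]
    rw [h4] at h2
    rcases smul_eq_zero.mp h2 with h | h
    · exact h
    · exact absurd h hΛH
  -- independent representation of comul Λ with coefficients in A
  obtain ⟨sΛ, hsΛ1, _⟩ := hrep Λ
  set u : H ⊗[k] ↥A := ∑ p ∈ sΛ, p.1 ⊗ₜ[k] p.2 with hudef
  obtain ⟨n, hv, Bv, li, hu⟩ := exists_indep_rep (K := k) u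
  have hΛrep : CoalgebraStruct.comul (R := k) ((Λ : H)) =
      ∑ e, hv e ⊗ₜ[k] ((Bv e : H)) := by
    rw [hsΛ1]
    calc (∑ p ∈ sΛ, p.1 ⊗ₜ[k] ((p.2 : H)))
        = (A.val.toLinearMap.lTensor H) u := by
          rw [hudef, map_sum]
          exact Finset.sum_congr rfl (fun p _ => by rw [LinearMap.lTensor_tmul]; rfl)
      _ = ∑ e, hv e ⊗ₜ[k] ((Bv e : H)) := by
          rw [hu, map_sum]
          exact Finset.sum_congr rfl (fun e _ => by rw [LinearMap.lTensor_tmul]; rfl)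
  obtain ⟨ξv, hξv⟩ := exists_dual_family hv li
  set C : Submodule k H := Submodule.span k (Set.range (fun e => ((Bv e : H)))) with hCdef
  have hBC : ∀ e, ((Bv e : H)) ∈ C := fun e => Submodule.subset_span ⟨e, rfl⟩
  -- absorption (right version)
  have habsorbB : ∀ (x : ↥A) (e : Fin n), ((Bv e : H)) * ((x : H)) ∈ C := by
    intro x e
    have hd := diamondR x
    have hLHS : Efun (ξv e) ((CoalgebraStruct.comul (R := k) ((Λ : H))) *
        ((1 : H) ⊗ₜ[k] ((x : H)))) = ((Bv e : H)) * ((x : H)) := by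
      rw [hΛrep, Finset.sum_mul, map_sum]
      have hterm : ∀ e', Efun (ξv e) ((hv e' ⊗ₜ[k] ((Bv e' : H))) *
          ((1 : H) ⊗ₜ[k] ((x : H)))) = ξv e (hv e') • (((Bv e' : H)) * ((x : H))) := by
        intro e'
        rw [Algebra.TensorProduct.tmul_mul_tmul, mul_one, Efun_tmul]
      rw [Finset.sum_congr rfl (fun e' _ => hterm e')]
      have : ∀ e', ξv e (hv e') • (((Bv e' : H)) * ((x : H))) =
          if e' = e then ((Bv e' : H)) * ((x : H)) else 0 := by
        intro e'
        rw [hξv e e']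
        by_cases h : e' = e <;> simp [h]
      rw [Finset.sum_congr rfl (fun e' _ => this e')]
      simp
    have hRHS : Efun (ξv e) (((mulRight k (T (φ x))).rTensor H)
        (CoalgebraStruct.comul (R := k) ((Λ : H)))) ∈ C := by
      rw [hΛrep, map_sum, map_sum]
      refine Submodule.sum_mem C (fun e' _ => ?_)
      rw [LinearMap.rTensor_tmul, Efun_tmul]
      exact Submodule.smul_mem C _ (hBC e')
    rw [← hLHS, hd]
    exact hRHS
  have habsorb : ∀ (x : ↥A), ∀ c ∈ C, c * ((x : H)) ∈ C := by
    intro x c hc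
    induction hc using Submodule.span_induction with
    | mem c hcmem =>
      obtain ⟨e, rfl⟩ := hcmem
      exact habsorbB x e
    | zero => rw [zero_mul]; exact C.zero_mem
    | add c1 c2 _ _ h1 h2 => rw [add_mul]; exact C.add_mem h1 h2
    | smul r c _ h1 => rw [smul_mul_assoc]; exact C.smul_mem r h1
  have hCfin : FiniteDimensional k C := by
    rw [hCdef]
    exact FiniteDimensional.span_of_finite k (Set.finite_range _)
  let π : ↥A →ₗ[k] (↥C →ₗ[k] ↥C) :=
    { toFun := fun x => (mulRight k ((x : H))).restrict (fun c hc => habsorb x c hc)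
      map_add' := by
        intro x y
        ext c
        have : ((x + y : ↥A) : H) = ((x : H)) + ((y : H)) := rfl
        simp [LinearMap.coe_restrict_apply, this, mul_add]
        rfl
      map_smul' := by
        intro r x
        ext c
        have : ((r • x : ↥A) : H) = r • ((x : H)) := rfl
        simp [LinearMap.coe_restrict_apply, this, mul_smul_comm]
        rfl }
  have hker0 : ∀ x : ↥A, π x = 0 → x = 0 := by
    intro x hx
    have hBzero : ∀ e, ((Bv e : H)) * ((x : H)) = 0 := by
      intro e
      have h1 : (π x) ⟨((Bv e : H)), hBC e⟩ = 0 := by rw [hx]; rfl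
      have h2 := congrArg (Subtype.val) h1
      exact h2
    have hw0 : (CoalgebraStruct.comul (R := k) ((Λ : H))) * ((1 : H) ⊗ₜ[k] ((x : H))) = 0 := by
      rw [hΛrep, Finset.sum_mul]
      refine Finset.sum_eq_zero (fun e _ => ?_)
      rw [Algebra.TensorProduct.tmul_mul_tmul, hBzero e, TensorProduct.tmul_zero]
    have h4 : Gmap (g3 (k := k)) (Mmap (k := k)
        ((CoalgebraStruct.comul (R := k) ((Λ : H))) * ((1 : H) ⊗ₜ[k] ((x : H))))) = 0 := by
      rw [hw0, map_zero, map_zero]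
    rw [map_mul, Mmap_tmul, G3_mul_one_tmul,
      collapse_spectator (g3 (k := k)) g3_comp_comul ((Λ : H)), step2R x] at h4
    exact hphiker hL5R x (tmul_right_cancel _ _ hΛH h4)
  have hinj : Function.Injective π := by
    intro x y hxy
    have : π (x - y) = 0 := by rw [map_sub, hxy, sub_self]
    exact sub_eq_zero.mp (hker0 _ this)
  exact Module.Finite.of_injective π hinj

end Main

end HopfProofAux

/-- A left coideal subalgebra of a Hopf algebra admitting a nonzero left or
right `μ`-integral is finite-dimensional. -/
theorem finiteDimensional_of_integral
    (k H : Type*) [Field k] [Ring H] [HopfAlgebra k H]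
    (hS : Function.Bijective (HopfAlgebra.antipode (R := k) (A := H)))
    (A : Subalgebra k H)
    (hcoid : ∀ a ∈ A, Coalgebra.comul (R := k) a ∈
      Submodule.span k {t : H ⊗[k] H | ∃ x y : H, y ∈ A ∧ t = x ⊗ₜ[k] y})
    (μ : ↥A →ₐ[k] k) (hμ : ∃ a, μ a ≠ 0)
    (h : (∃ Λ : ↥A, Λ ≠ 0 ∧ ∀ a : ↥A, a * Λ = μ a • Λ) ∨
         (∃ Λ : ↥A, Λ ≠ 0 ∧ ∀ a : ↥A, Λ * a = μ a • Λ)) :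
    FiniteDimensional k ↥A := by
  obtain ⟨Λ, hΛ, hint⟩ | ⟨Λ, hΛ, hint⟩ := h
  · exact HopfProofAux.case_left A hS hcoid μ Λ hΛ hint
  · exact HopfProofAux.case_right A hS hcoid μ Λ hΛ hint
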